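/- Let N be an odd positive integer and let C be a weakly self-dual cyclic binary code of length N with generator polynomial g(X). Then the number of nonzero coefficients of the product g(X)·g^rev(X), computed in F_2[X], is divisible by four. -/

import Mathlib

open Polynomial

/-- Cyclic shift: `(c_0,…,c_{N-1}) ↦ (c_{N-1},c_0,…,c_{N-2})`. -/
def cshift {N : ℕ} {F : Type*} (c : Fin N → F) : Fin N → F :=
  fun i => c ((finRotate N).symm i)

/-- The code polynomial associated to a codeword. -/
noncomputable def toPoly {F : Type*} [Semiring F] {N : ℕ} (c : Fin N → F) : Polynomial F :=
  ∑ i, Polynomial.C (c i) * Polynomial.X ^ (i : ℕ)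

/-- The dual code of a linear code. -/
def dualCode {F : Type*} [CommRing F] {ι : Type*} [Fintype ι]
    (C : Submodule F (ι → F)) : Submodule F (ι → F) where
  carrier := { v | ∀ c ∈ C, ∑ i, c i * v i = 0 }
  zero_mem' := by intro c hc; simp
  add_mem' := by
    intro a b ha hb c hc
    simp [mul_add, Finset.sum_add_distrib, ha c hc, hb c hc]
  smul_mem' := by
    intro r a ha c hc
    simp [Pi.smul_apply, smul_eq_mul, mul_left_comm, ← Finset.mul_sum, ha c hc]

/-- `g` is the generator polynomial of `C`: the (unique) monic nonzero code
polynomial of least degree. -/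
def IsGenPoly {F : Type*} [Field F] {N : ℕ} (C : Submodule F (Fin N → F))
    (g : Polynomial F) : Prop :=
  g.Monic ∧ (∃ c ∈ C, toPoly c = g) ∧
    ∀ c ∈ C, toPoly c ≠ 0 → g.degree ≤ (toPoly c).degree

/-! ### Auxiliary lemmas -/

lemma zmod2_mul_self (x : ZMod 2) : x * x = x := by revert x; decide

lemma zmod2_ne_zero {x : ZMod 2} (h : x ≠ 0) : x = 1 := by revert h; revert x; decide

/-- Over `ZMod 2`, the parity of the support equals the value at 1. -/
lemma card_support_cast (p : Polynomial (ZMod 2)) :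
    ((p.support.card : ZMod 2)) = p.eval 1 := by
  rw [eval_eq_sum, Polynomial.sum]
  simp only [one_pow, mul_one]
  rw [Finset.card_eq_sum_ones p.support, Nat.cast_sum]
  refine Finset.sum_congr rfl fun i hi => ?_
  rw [zmod2_ne_zero (Polynomial.mem_support_iff.mp hi)]
  exact Nat.cast_one

lemma natDegree_reflect_le {R : Type*} [Semiring R] (M : ℕ) (p : Polynomial R)
    (h : p.natDegree ≤ M) : (reflect M p).natDegree ≤ M := by
  rw [natDegree_le_iff_coeff_eq_zero]
  intro m hm
  rw [coeff_reflect, revAt_eq_self_of_lt hm]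
  exact coeff_eq_zero_of_natDegree_lt (lt_of_le_of_lt h hm)

lemma eval_one_reflect (M : ℕ) (p : Polynomial (ZMod 2)) (h : p.natDegree ≤ M) :
    (reflect M p).eval 1 = p.eval 1 := by
  rw [eval_eq_sum_range' (Nat.lt_succ_of_le (natDegree_reflect_le M p h)) 1,
    eval_eq_sum_range' (Nat.lt_succ_of_le h) 1]
  simp only [one_pow, mul_one, coeff_reflect]
  calc ∑ i ∈ Finset.range (M+1), p.coeff (revAt M i)
      = ∑ i ∈ Finset.range (M+1), p.coeff (M + 1 - 1 - i) := by
        refine Finset.sum_congr rfl fun i hi => ?_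
        rw [Finset.mem_range] at hi
        rw [revAt_le (by omega), Nat.add_sub_cancel]
    _ = ∑ i ∈ Finset.range (M+1), p.coeff i := Finset.sum_range_reflect _ _

lemma reflect_shift {R : Type*} [Semiring R] (p : Polynomial R) (k d : ℕ)
    (h : p.natDegree ≤ k) : reflect (k + d) p = X ^ d * reflect k p := by
  ext m
  rw [coeff_reflect, coeff_X_pow_mul']
  split_ifs with hm
  · rw [coeff_reflect]
    rcases le_or_gt m (k + d) with h1 | h1
    · rw [revAt_le h1, revAt_le (by omega)]
      congr 1
      omega
    · rw [revAt_eq_self_of_lt h1, revAt_eq_self_of_lt (by omega),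
        coeff_eq_zero_of_natDegree_lt (by omega), coeff_eq_zero_of_natDegree_lt (by omega)]
  · rcases le_or_gt m (k+d) with h1 | h1
    · rw [revAt_le h1]
      exact coeff_eq_zero_of_natDegree_lt (by omega)
    · rw [revAt_eq_self_of_lt h1]
      exact coeff_eq_zero_of_natDegree_lt (by omega)

lemma reflect_finset_sum {R : Type*} [Semiring R] {ι : Type*} (s : Finset ι)
    (f : ι → Polynomial R) (M : ℕ) :
    reflect M (∑ i ∈ s, f i) = ∑ i ∈ s, reflect M (f i) := by
  classical
  induction s using Finset.induction_on with
  | empty => simp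
  | insert _ _ h ih => rw [Finset.sum_insert h, Finset.sum_insert h, reflect_add, ih]

lemma reflect_toPoly {n : ℕ} (b : Fin (n+1) → ZMod 2) :
    reflect n (toPoly b) = ∑ i, C (b i) * X ^ (n - (i : ℕ)) := by
  rw [toPoly, reflect_finset_sum]
  refine Finset.sum_congr rfl fun i _ => ?_
  rw [reflect_C_mul_X_pow, revAt_le i.is_le]

lemma coeff_mul_rev {n : ℕ} (a b : Fin (n+1) → ZMod 2) (m : ℕ) :
    (toPoly a * reflect n (toPoly b)).coeff m
      = ∑ i : Fin (n+1), ∑ i' : Fin (n+1),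
          a i * b i' * (if m = (i : ℕ) + (n - (i' : ℕ)) then 1 else 0) := by
  rw [reflect_toPoly, toPoly, Finset.sum_mul_sum, finset_sum_coeff]
  refine Finset.sum_congr rfl fun i _ => ?_
  rw [finset_sum_coeff]
  refine Finset.sum_congr rfl fun i' _ => ?_
  rw [mul_mul_mul_comm, ← C_mul, ← pow_add, coeff_C_mul, coeff_X_pow]

open Fin.NatCast in
lemma fin_sub_cast_val {n : ℕ} (i : Fin (n+1)) (j : ℕ) (hj : j ≤ n) :
    ((i - ((j+1 : ℕ) : Fin (n+1)) : Fin (n+1)) : ℕ) + (j+1) = (i : ℕ)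
    ∨ ((i - ((j+1 : ℕ) : Fin (n+1)) : Fin (n+1)) : ℕ) + (j+1) = (i : ℕ) + (n+1) := by
  have hi := i.is_le
  have hval : ((i - ((j+1 : ℕ) : Fin (n+1)) : Fin (n+1)) : ℕ)
      = ((n+1) - (j+1) % (n+1) + (i:ℕ)) % (n+1) := by
    simp only [Fin.sub_def, Fin.val_natCast]
  rcases eq_or_lt_of_le hj with rfl | hlt
  · rw [Nat.mod_self, Nat.sub_zero, Nat.add_comm (j+1) (i:ℕ), Nat.add_mod_right,
      Nat.mod_eq_of_lt (show (i:ℕ) < j+1 by omega)] at hval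
    omega
  · rw [Nat.mod_eq_of_lt (show j+1 < n+1 by omega)] at hval
    rcases le_or_gt (i:ℕ) j with hij | hij
    · rw [Nat.mod_eq_of_lt (show (n+1) - (j+1) + (i:ℕ) < n+1 by omega)] at hval
      omega
    · rw [Nat.mod_eq_sub_mod (show (n+1) - (j+1) + (i:ℕ) ≥ n+1 by omega),
        Nat.mod_eq_of_lt (show (n+1) - (j+1) + (i:ℕ) - (n+1) < n+1 by omega)] at hval
      omega

open Fin.NatCast in
lemma coeff_wrap_sum {n : ℕ} (a b : Fin (n+1) → ZMod 2) (j : ℕ) (hj : j ≤ n) :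
    (toPoly a * reflect n (toPoly b)).coeff j
      + (toPoly a * reflect n (toPoly b)).coeff (n+1+j)
      = ∑ i : Fin (n+1), a i * b (i - ((j+1 : ℕ) : Fin (n+1))) := by
  rw [coeff_mul_rev, coeff_mul_rev, ← Finset.sum_add_distrib]
  refine Finset.sum_congr rfl fun i _ => ?_
  rw [← Finset.sum_add_distrib]
  set w : Fin (n+1) := i - ((j+1 : ℕ) : Fin (n+1)) with hw
  have hi := i.is_le
  have hwval : (w : ℕ) + (j+1) = (i : ℕ) ∨ (w : ℕ) + (j+1) = (i : ℕ) + (n+1) :=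
    fin_sub_cast_val i j hj
  calc ∑ i' : Fin (n+1),
        (a i * b i' * (if j = (i:ℕ) + (n - (i':ℕ)) then 1 else 0)
          + a i * b i' * (if n+1+j = (i:ℕ) + (n - (i':ℕ)) then 1 else 0))
      = ∑ i' : Fin (n+1), if i' = w then a i * b i' else 0 := by
        refine Finset.sum_congr rfl fun i' _ => ?_
        have hi' := i'.is_le
        by_cases h3 : i' = w
        · have hv : (i' : ℕ) = (w : ℕ) := by rw [h3]
          rw [if_pos h3]
          rcases hwval with hwval | hwval
          · rw [if_neg (by omega), if_pos (by omega)]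
            ring
          · rw [if_pos (by omega), if_neg (by omega)]
            ring
        · have hv : (i' : ℕ) ≠ (w : ℕ) := fun h => h3 (Fin.ext h)
          rw [if_neg h3, if_neg (by omega), if_neg (by omega)]
          ring
    _ = a i * b w := by
        rw [Finset.sum_ite_eq' Finset.univ w (fun i' => a i * b i'),
          if_pos (Finset.mem_univ w)]

open Fin.NatCast in
lemma shift_mem {n : ℕ} (C : Submodule (ZMod 2) (Fin (n+1) → ZMod 2))
    (hcyc : ∀ c ∈ C, cshift c ∈ C) (c : Fin (n+1) → ZMod 2) (hc : c ∈ C) (s : ℕ) :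
    (fun i => c (i - ((s : ℕ) : Fin (n+1)))) ∈ C := by
  induction s with
  | zero =>
      have : (fun i => c (i - ((0 : ℕ) : Fin (n+1)))) = c := by
        funext i
        rw [Nat.cast_zero, sub_zero]
      rw [this]
      exact hc
  | succ s ih =>
      have hmem := hcyc _ ih
      have heq : cshift (fun i => c (i - ((s : ℕ) : Fin (n+1))))
          = fun i => c (i - ((s+1 : ℕ) : Fin (n+1))) := by
        funext i
        show c ((finRotate (n+1)).symm i - ((s : ℕ) : Fin (n+1))) = _
        congr 1
        have hsym : (finRotate (n+1)).symm i = i - 1 := by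
          rw [Equiv.symm_apply_eq, finRotate_succ_apply]
          exact (sub_add_cancel i 1).symm
        rw [hsym, sub_sub, Nat.cast_add, Nat.cast_one]
        exact congrArg (i - ·) (add_comm _ _)
      rwa [heq] at hmem

lemma coeff_wrap_zero {n : ℕ} (C : Submodule (ZMod 2) (Fin (n+1) → ZMod 2))
    (hcyc : ∀ c ∈ C, cshift c ∈ C) (hsd : C ≤ dualCode C)
    (c : Fin (n+1) → ZMod 2) (hc : c ∈ C) (j : ℕ) (hj : j ≤ n) :
    (toPoly c * reflect n (toPoly c)).coeff j
      + (toPoly c * reflect n (toPoly c)).coeff (n+1+j) = 0 := by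
  rw [coeff_wrap_sum c c j hj]
  have hmem := shift_mem C hcyc c hc (j+1)
  have hdual := hsd hmem
  simpa using hdual c hc

lemma dvd_of_wrap {n : ℕ} (P : Polynomial (ZMod 2)) (hdeg : P.natDegree ≤ 2*n)
    (hw : ∀ j ≤ n, P.coeff j + P.coeff (n+1+j) = 0) :
    (X^(n+1) - 1 : Polynomial (ZMod 2)) ∣ P := by
  refine ⟨∑ j ∈ Finset.range (n+1), C (P.coeff (n+1+j)) * X^j, ?_⟩
  set Q := ∑ j ∈ Finset.range (n+1), C (P.coeff (n+1+j)) * X^j with hQdef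
  have hQ : ∀ m, Q.coeff m = if m ≤ n then P.coeff (n+1+m) else 0 := by
    intro m
    rw [hQdef, finset_sum_coeff]
    simp only [coeff_C_mul, coeff_X_pow, mul_ite, mul_one, mul_zero]
    rw [Finset.sum_ite_eq (Finset.range (n+1)) m (fun j => P.coeff (n+1+j))]
    simp [Finset.mem_range, Nat.lt_succ_iff]
  ext m
  rw [sub_mul, one_mul, coeff_sub, coeff_X_pow_mul', hQ, hQ]
  by_cases h1 : n+1 ≤ m
  · rw [if_pos h1]
    by_cases h2 : m ≤ 2*n+1
    · rw [if_pos (by omega), if_neg (by omega)]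
      have h3 : n+1+(m-(n+1)) = m := by omega
      rw [h3, sub_zero]
    · rw [if_neg (by omega), if_neg (by omega),
        coeff_eq_zero_of_natDegree_lt (by omega)]
      simp
  · rw [if_neg h1, if_pos (by omega)]
    have h3 := hw m (by omega)
    linear_combination h3

/-- For a weakly self-dual cyclic binary code of odd length with generator
polynomial g, the number of nonzero coefficients of g * g^rev is divisible
by four. -/
theorem stmt_6 (N : ℕ) (hN : 0 < N) (hodd : Odd N)
    (C : Submodule (ZMod 2) (Fin N → ZMod 2))
    (hcyc : ∀ c ∈ C, cshift c ∈ C)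
    (hsd : C ≤ dualCode C)
    (g : Polynomial (ZMod 2)) (hg : IsGenPoly C g) :
    4 ∣ (g * g.reverse).support.card := by
  obtain ⟨n, rfl⟩ : ∃ n, N = n + 1 := ⟨N - 1, by omega⟩
  obtain ⟨hmonic, ⟨c, hcC, hcg⟩, -⟩ := hg
  have hg0 : g ≠ 0 := hmonic.ne_zero
  have hdegg : g.natDegree ≤ n := by
    rw [← hcg, toPoly]
    exact natDegree_sum_le_of_forall_le _ _ fun i _ =>
      (natDegree_C_mul_X_pow_le _ _).trans i.is_le
  -- g(1) = 0
  have heval : g.eval 1 = 0 := by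
    have hdual := hsd hcC
    have hself : ∑ i, c i * c i = 0 := hdual c hcC
    rw [← hcg, toPoly]
    simp only [eval_finset_sum, eval_mul, eval_C, eval_pow, eval_X, one_pow, mul_one]
    calc ∑ i, c i = ∑ i, c i * c i := by
          exact Finset.sum_congr rfl fun i _ => (zmod2_mul_self (c i)).symm
      _ = 0 := hself
  have hreveval : g.reverse.eval 1 = 0 := by
    rw [reverse, eval_one_reflect _ _ le_rfl]
    exact heval
  -- X^(n+1) - 1 divides g * g.reverse
  have hwrap : ∀ j ≤ n, (g * reflect n g).coeff j + (g * reflect n g).coeff (n+1+j) = 0 := by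
    intro j hj
    rw [← hcg]
    exact coeff_wrap_zero C hcyc hsd c hcC j hj
  have hPdeg : (g * reflect n g).natDegree ≤ 2*n :=
    natDegree_mul_le.trans (by
      have := natDegree_reflect_le n g hdegg
      omega)
  have hdvdP : (X^(n+1) - 1 : Polynomial (ZMod 2)) ∣ g * reflect n g :=
    dvd_of_wrap _ hPdeg hwrap
  have hreflect : reflect n g = X ^ (n - g.natDegree) * g.reverse := by
    rw [reverse]
    have h2 := reflect_shift g g.natDegree (n - g.natDegree) le_rfl
    rwa [show g.natDegree + (n - g.natDegree) = n by omega] at h2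
  have hdvdP' : (X^(n+1) - 1 : Polynomial (ZMod 2))
      ∣ (g * g.reverse) * X ^ (n - g.natDegree) := by
    have : g * reflect n g = (g * g.reverse) * X ^ (n - g.natDegree) := by
      rw [hreflect]; ring
    rwa [← this]
  have hcop : IsCoprime (X^(n+1) - 1 : Polynomial (ZMod 2)) (X ^ (n - g.natDegree)) := by
    refine IsCoprime.pow_right ⟨-1, X^n, ?_⟩
    ring
  have hdvdp : (X^(n+1) - 1 : Polynomial (ZMod 2)) ∣ g * g.reverse :=
    hcop.dvd_of_dvd_mul_right hdvdP'
  obtain ⟨q, hq⟩ := hdvdp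
  -- degrees
  have hp0 : g * g.reverse ≠ 0 :=
    mul_ne_zero hg0 (by rwa [Ne, reverse_eq_zero])
  have hq0 : q ≠ 0 := by
    intro h
    rw [h, mul_zero] at hq
    exact hp0 hq
  have hXn0 : (X^(n+1) - 1 : Polynomial (ZMod 2)) ≠ 0 := by
    intro h
    have := natDegree_X_pow_sub_C (n := n+1) (r := (1 : ZMod 2))
    rw [C_1] at this
    rw [h] at this
    simp at this
  have hdegXn : (X^(n+1) - 1 : Polynomial (ZMod 2)).natDegree = n+1 := by
    have := natDegree_X_pow_sub_C (n := n+1) (r := (1 : ZMod 2))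
    rwa [C_1] at this
  have hdegp : (g * g.reverse).natDegree ≤ 2*n :=
    natDegree_mul_le.trans (by
      have := reverse_natDegree_le g
      omega)
  have hdegq : q.natDegree ≤ n - 1 := by
    have h1 : (g * g.reverse).natDegree
        = (X^(n+1) - 1 : Polynomial (ZMod 2)).natDegree + q.natDegree := by
      rw [hq, natDegree_mul hXn0 hq0]
    omega
  -- support splits into two disjoint copies of support q
  have hdegq' : q.natDegree < n + 1 := by omega
  have hpeq : g * g.reverse = X^(n+1) * q + q := by
    rw [hq, sub_mul, one_mul, sub_eq_add_neg]
    congr 1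
    ext m
    rw [coeff_neg]
    exact CharTwo.neg_eq _
  have hcoeffp : ∀ m, (g * g.reverse).coeff m
      = (if n+1 ≤ m then q.coeff (m - (n+1)) else 0) + q.coeff m := by
    intro m
    rw [hpeq, coeff_add, coeff_X_pow_mul']
  have hsupp : (g * g.reverse).support
      = q.support.map ⟨fun x => n+1+x, add_right_injective (n+1)⟩ ∪ q.support := by
    ext m
    simp only [Finset.mem_union, Finset.mem_map, Function.Embedding.coeFn_mk,
      mem_support_iff]
    rw [hcoeffp]
    by_cases h1 : n+1 ≤ m
    · rw [if_pos h1, coeff_eq_zero_of_natDegree_lt (show q.natDegree < m by omega),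
        add_zero]
      constructor
      · intro h
        exact Or.inl ⟨m - (n+1), h, by omega⟩
      · rintro (⟨x, hx, rfl⟩ | h)
        · have : n+1+x-(n+1) = x := by omega
          rwa [this]
        · exact absurd rfl h
    · rw [if_neg h1, zero_add]
      constructor
      · exact Or.inr
      · rintro (⟨x, hx, hxm⟩ | h)
        · omega
        · exact h
  have hdisj : Disjoint (q.support.map ⟨fun x => n+1+x, add_right_injective (n+1)⟩) q.support := by
    rw [Finset.disjoint_left]
    rintro m hm hm'
    simp only [Finset.mem_map, Function.Embedding.coeFn_mk] at hm
    obtain ⟨x, hx, rfl⟩ := hm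
    have := le_natDegree_of_mem_supp _ hm'
    omega
  have hcard : (g * g.reverse).support.card = 2 * q.support.card := by
    rw [hsupp, Finset.card_union_of_disjoint hdisj, Finset.card_map]
    ring
  -- q has even weight
  have hgeom : (X^(n+1) - 1 : Polynomial (ZMod 2))
      = (∑ i ∈ Finset.range (n+1), X^i) * (X - (Polynomial.C 1)) := by
    rw [C_1]
    exact (geom_sum_mul X (n+1)).symm
  have hsq : (X - (Polynomial.C 1)) * (X - (Polynomial.C 1)) ∣ g * g.reverse :=
    mul_dvd_mul (dvd_iff_isRoot.mpr heval) (dvd_iff_isRoot.mpr hreveval)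
  have hXC0 : (X - (Polynomial.C 1) : Polynomial (ZMod 2)) ≠ 0 := X_sub_C_ne_zero 1
  have hdvdq : (X - (Polynomial.C 1) : Polynomial (ZMod 2)) ∣ q := by
    obtain ⟨r, hr⟩ := hsq
    have h1 : (X - (Polynomial.C 1)) * ((X - (Polynomial.C 1)) * r)
        = (X - (Polynomial.C 1)) * ((∑ i ∈ Finset.range (n+1), X^i) * q) := by
      rw [← mul_assoc, ← hr, hq, hgeom]
      ring
    have h2 : (X - (Polynomial.C 1) : Polynomial (ZMod 2)) ∣ (∑ i ∈ Finset.range (n+1), X^i) * q := by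
      refine ⟨r, ?_⟩
      exact mul_left_cancel₀ hXC0 h1.symm
    rcases (prime_X_sub_C (1 : ZMod 2)).2.2 _ _ h2 with h | h
    · exfalso
      have := dvd_iff_isRoot.mp h
      rw [IsRoot] at this
      simp only [eval_finset_sum, eval_pow, eval_X, one_pow, Finset.sum_const,
        Finset.card_range, nsmul_eq_mul, mul_one] at this
      obtain ⟨k, hk⟩ := hodd
      rw [hk] at this
      push_cast at this
      rw [show ((2 : ZMod 2) * k + 1) = 2 * k + 1 by ring] at this
      simp [show (2 : ZMod 2) = 0 from rfl] at this
    · exact h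
  have hqeval : q.eval 1 = 0 := by
    have := dvd_iff_isRoot.mp hdvdq
    exact this
  have heven : 2 ∣ q.support.card := by
    have h1 : ((q.support.card : ℕ) : ZMod 2) = 0 := by
      rw [card_support_cast, hqeval]
    exact (ZMod.natCast_eq_zero_iff _ _).mp h1
  obtain ⟨m, hm⟩ := heven
  rw [hcard, hm]
  omega
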